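/- Let R be a full-rank order in a number field K and let p be a prime number. Then p divides the index #(𝒪_K/R) of R in the maximal order 𝒪_K if and only if R has a non-invertible prime ideal containing p, i.e. a prime ideal 𝔭 of R with p ∈ 𝔭 such that there is no R-submodule J of K with 𝔭J = R. -/

import Mathlib

set_option maxHeartbeats 1000000
set_option linter.unusedSectionVars false

lemma lemA {K : Type*} [Field K] (R : Subring K) [IsNoetherianRing ↥R]
    (P : Submodule ↥R K) (hP1 : P ≤ 1) (hPne : P ≠ 1)
    (C : Submodule ↥R K) (h1C : (1:K) ∈ C) (hCC : C * C ≤ C)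
    (c : K) (hc0 : c ≠ 0) (hcF : c ∈ (1:Submodule ↥R K) / C)
    (hfp : (1:Submodule ↥R K)/C ≤ P)
    (J : Submodule ↥R K) (hJ : P * J = 1) : False := by
  obtain ⟨P', hP'd⟩ : ∃ P', P' = (1:Submodule ↥R K) / P := ⟨_, rfl⟩
  obtain ⟨F, hFd⟩ : ∃ F, F = (1:Submodule ↥R K) / C := ⟨_, rfl⟩
  have h11 : ∀ x ∈ (1 : Submodule ↥R K), ∀ y ∈ (1 : Submodule ↥R K),
      x * y ∈ (1 : Submodule ↥R K) := fun x hx y hy => by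
    have := Submodule.mul_mem_mul hx hy
    rwa [one_mul] at this
  have hJP' : J ≤ P' := by
    intro j hj
    rw [hP'd, Submodule.mem_div_iff_forall_mul_mem]
    intro y hy
    have := Submodule.mul_mem_mul hy hj
    rw [hJ] at this
    rwa [mul_comm]
  have hPP'le : P * P' ≤ 1 := by
    rw [Submodule.mul_le]
    intro m hm n hn
    rw [hP'd, Submodule.mem_div_iff_forall_mul_mem] at hn
    rw [mul_comm]; exact hn m hm
  have hPP' : P * P' = 1 := by
    refine le_antisymm hPP'le ?_
    rw [← hJ]
    exact mul_le_mul_right hJP' _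
  have hF1 : F ≤ 1 := by
    intro x hx
    rw [hFd, Submodule.mem_div_iff_forall_mul_mem] at hx
    simpa using hx 1 h1C
  have key : F * P' ≤ F := by
    rw [Submodule.mul_le]
    intro x hx y hy
    rw [hFd, Submodule.mem_div_iff_forall_mul_mem]
    intro cc hcc
    have hxc : x * cc ∈ F := by
      rw [hFd, Submodule.mem_div_iff_forall_mul_mem]
      intro c' hc'
      rw [mul_assoc]
      rw [hFd] at hx
      exact (Submodule.mem_div_iff_forall_mul_mem.mp hx) _ (hCC (Submodule.mul_mem_mul hcc hc'))
    have hm : (x * cc) * y ∈ P * P' := Submodule.mul_mem_mul (hfp (hFd ▸ hxc)) hy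
    rw [hPP'] at hm
    have hxyc : x * y * cc = (x * cc) * y := by ring
    rwa [hxyc]
  have hcP : Submodule.span ↥R {c} ≤ F := by
    rw [Submodule.span_le, Set.singleton_subset_iff]
    rw [hFd]; exact hcF
  have h1P' : (1 : Submodule ↥R K) ≤ P' := by
    intro x hx
    rw [hP'd, Submodule.mem_div_iff_forall_mul_mem]
    intro y hy
    exact h11 x hx y (hP1 hy)
  have hFPk : ∀ k : ℕ, F * P' ^ k ≤ F := by
    intro k; induction k with
    | zero => rw [pow_zero, mul_one]
    | succ n ih =>
        rw [pow_succ', ← mul_assoc]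
        exact le_trans (mul_le_mul_left key _) ih
  have hchain : ∀ k : ℕ, Submodule.span ↥R {c} * P' ^ k ≤ 1 :=
    fun k => le_trans (le_trans (mul_le_mul_left hcP _) (hFPk k)) hF1
  have hmono : Monotone fun k : ℕ => (Submodule.span ↥R {c} * P' ^ k).comap
      (Algebra.linearMap ↥R K) := by
    apply monotone_nat_of_le_succ
    intro k
    apply Submodule.comap_mono
    rw [pow_succ]
    calc Submodule.span ↥R {c} * P' ^ k = Submodule.span ↥R {c} * P' ^ k * 1 := by rw [mul_one]
    _ ≤ Submodule.span ↥R {c} * P' ^ k * P' := mul_le_mul_right h1P' _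
    _ = Submodule.span ↥R {c} * (P' ^ k * P') := by rw [mul_assoc]
  obtain ⟨n, hn⟩ := monotone_stabilizes_iff_noetherian.mpr inferInstance ⟨_, hmono⟩
  have hstab := hn (n + 1) (Nat.le_succ n)
  have hrange : ∀ N : Submodule ↥R K, N ≤ 1 →
      Submodule.map (Algebra.linearMap ↥R K) (N.comap (Algebra.linearMap ↥R K)) = N := by
    intro N hN
    rw [Submodule.map_comap_eq, ← Submodule.one_eq_range]
    exact inf_eq_right.mpr hN
  have heq : Submodule.span ↥R {c} * P' ^ (n+1) = Submodule.span ↥R {c} * P' ^ n := by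
    have h := congrArg (Submodule.map (Algebra.linearMap ↥R K)) hstab.symm
    simp only [OrderHom.coe_mk] at h
    rwa [hrange _ (hchain (n+1)), hrange _ (hchain n)] at h
  have hinv : Submodule.span ↥R {c⁻¹} * Submodule.span ↥R {c} = 1 := by
    rw [Submodule.span_mul_span, Set.singleton_mul_singleton, inv_mul_cancel₀ hc0,
      ← Submodule.one_eq_span]
  have hcancel : P' ^ (n+1) = P' ^ n := by
    have h := congrArg (fun N => Submodule.span ↥R {c⁻¹} * N) heq
    rwa [← mul_assoc, ← mul_assoc, hinv, one_mul, one_mul] at h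
  have hPn : P ^ n * P' ^ n = 1 := by
    rw [← mul_pow, hPP', one_pow]
  have hP'1 : P' = 1 := by
    calc P' = P ^ n * P' ^ n * P' := by rw [hPn, one_mul]
    _ = P ^ n * P' ^ (n+1) := by rw [mul_assoc, ← pow_succ]
    _ = P ^ n * P' ^ n := by rw [hcancel]
    _ = 1 := hPn
  exact hPne (by rw [← hPP', hP'1, mul_one])

section Infra
variable {K : Type*} [Field K] [NumberField K] {R : Subring K}

lemma lemFin (hfree : Nonempty (Module.Basis (Fin (Module.finrank ℚ K)) ℤ ↥R)) :
    Module.Finite ℤ ↥R := Module.Finite.of_basis hfree.some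

lemma lemRO (hfree : Nonempty (Module.Basis (Fin (Module.finrank ℚ K)) ℤ ↥R)) :
    ∀ x ∈ R, x ∈ integralClosure ℤ K := by
  intro x hx
  have : Module.Finite ℤ ↥R := lemFin hfree
  have hFG : (subalgebraOfSubring R).toSubmodule.FG := by
    rw [← Module.Finite.iff_fg]
    exact this
  exact IsIntegral.of_mem_of_fg (subalgebraOfSubring R) hFG x hx

lemma lemSpan (hfree : Nonempty (Module.Basis (Fin (Module.finrank ℚ K)) ℤ ↥R)) :
    Submodule.span ℚ (R : Set K) = ⊤ := by
  obtain ⟨b⟩ := hfree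
  set v : Fin (Module.finrank ℚ K) → K := fun i => ((b i : ↥R) : K) with hv
  have liZ : LinearIndependent ℤ v := by
    have := b.linearIndependent
    have hinj : Function.Injective (R.subtype.toAddMonoidHom.toIntLinearMap) :=
      Subtype.val_injective
    exact this.map' _ (LinearMap.ker_eq_bot.mpr hinj)
  have liQ : LinearIndependent ℚ v := (LinearIndependent.iff_fractionRing ℤ ℚ).mp liZ
  have htop : Submodule.span ℚ (Set.range v) = ⊤ :=
    liQ.span_eq_top_of_card_eq_finrank' (by simp)
  apply top_unique
  rw [← htop]
  apply Submodule.span_mono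
  rintro x ⟨i, rfl⟩
  exact (b i).2

lemma lemTor (hfree : Nonempty (Module.Basis (Fin (Module.finrank ℚ K)) ℤ ↥R)) :
    ∀ x : K, ∃ d : ℤ, d ≠ 0 ∧ d • x ∈ (R : Set K) := by
  intro x
  have hx : x ∈ Submodule.span ℚ (R : Set K) := by
    rw [lemSpan hfree]; trivial
  induction hx using Submodule.span_induction with
  | mem y hy => exact ⟨1, one_ne_zero, by simpa using hy⟩
  | zero => exact ⟨1, one_ne_zero, by simpa using R.zero_mem⟩
  | add y z _ _ hy hz =>
      obtain ⟨d₁, hd₁, hyd⟩ := hy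
      obtain ⟨d₂, hd₂, hzd⟩ := hz
      refine ⟨d₁ * d₂, mul_ne_zero hd₁ hd₂, ?_⟩
      have : (d₁ * d₂) • (y + z) = d₂ • (d₁ • y) + d₁ • (d₂ • z) := by
        rw [smul_add, smul_smul, smul_smul, mul_comm d₂ d₁]
      rw [this]
      exact R.add_mem (R.zsmul_mem hyd d₂) (R.zsmul_mem hzd d₁)
  | smul q y _ hy =>
      obtain ⟨d, hd, hyd⟩ := hy
      refine ⟨d * (q.den : ℤ), mul_ne_zero hd (by exact_mod_cast q.den_nz), ?_⟩
      have hden : ((q.den : ℚ)) * q = (q.num : ℚ) := by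
        rw [mul_comm]
        exact_mod_cast Rat.mul_den_eq_num q
      have h2 : ((q.den : K)) * ((q : ℚ) : K) = ((q.num : ℤ) : K) := by
        have := congrArg (fun t : ℚ => (t : K)) hden
        push_cast at this ⊢
        exact this
      have : (d * (q.den : ℤ)) • (q • y) = q.num • (d • y) := by
        simp only [zsmul_eq_mul, Rat.smul_def]
        push_cast
        linear_combination (d : K) * y * h2
      rw [this]
      exact R.zsmul_mem hyd q.num
end Infra

section Fin2
variable {K : Type*} [Field K] [NumberField K] {R : Subring K}

lemma lemFinite (hfree : Nonempty (Module.Basis (Fin (Module.finrank ℚ K)) ℤ ↥R)) :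
    Finite (↥(integralClosure ℤ K).toSubring.toAddSubgroup ⧸
      R.toAddSubgroup.addSubgroupOf (integralClosure ℤ K).toSubring.toAddSubgroup) := by
  have hMF : Module.Finite ℤ ↥((integralClosure ℤ K).toSubring.toAddSubgroup) :=
    inferInstanceAs (Module.Finite ℤ (NumberField.RingOfIntegers K))
  have hFG : AddGroup.FG ↥((integralClosure ℤ K).toSubring.toAddSubgroup) :=
    Module.Finite.iff_addGroup_fg.mp hMF
  apply AddCommGroup.finite_of_fg_torsion
  intro g
  induction g using QuotientAddGroup.induction_on with
  | _ x =>
    obtain ⟨d, hd, hdx⟩ := lemTor hfree (x : K)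
    have hmem : d • x ∈ R.toAddSubgroup.addSubgroupOf (integralClosure ℤ K).toSubring.toAddSubgroup := by
      rw [AddSubgroup.mem_addSubgroupOf]
      have : ((d • x : _) : K) = d • (x : K) := rfl
      exact hdx
    have hzero : d • (QuotientAddGroup.mk x :
        ↥(integralClosure ℤ K).toSubring.toAddSubgroup ⧸
          R.toAddSubgroup.addSubgroupOf (integralClosure ℤ K).toSubring.toAddSubgroup) = 0 := by
      rw [← QuotientAddGroup.mk_zsmul]
      exact (QuotientAddGroup.eq_zero_iff _).mpr hmem
    refine isOfFinAddOrder_iff_nsmul_eq_zero.mpr ⟨d.natAbs, Int.natAbs_pos.mpr hd, ?_⟩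
    have : (d.natAbs : ℤ) • (QuotientAddGroup.mk x :
        ↥(integralClosure ℤ K).toSubring.toAddSubgroup ⧸
          R.toAddSubgroup.addSubgroupOf (integralClosure ℤ K).toSubring.toAddSubgroup) = 0 := by
      rcases Int.natAbs_eq d with h | h
      · rw [← h]; exact hzero
      · rw [← neg_neg (d.natAbs : ℤ), ← h, neg_smul, hzero, neg_zero]
    rwa [natCast_zsmul] at this
end Fin2

section MPR
variable {K : Type*} [Field K] [NumberField K] {R : Subring K}

lemma lem1mem {x : K} : x ∈ (1 : Submodule ↥R K) ↔ x ∈ (R : Set K) := by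
  rw [Submodule.one_eq_range]
  constructor
  · rintro ⟨r, rfl⟩; exact r.2
  · intro hx; exact ⟨⟨x, hx⟩, rfl⟩

lemma lem1memO {x : K} : x ∈ (1 : Submodule (NumberField.RingOfIntegers K) K) ↔
    x ∈ integralClosure ℤ K := by
  rw [Submodule.one_eq_range]
  constructor
  · rintro ⟨r, rfl⟩; exact r.2
  · intro hx; exact ⟨⟨x, hx⟩, rfl⟩

lemma lemMPR (hfree : Nonempty (Module.Basis (Fin (Module.finrank ℚ K)) ℤ ↥R))
    (p : ℕ) (hp : p.Prime)
    (hnd : ¬ p ∣ Nat.card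
        (↥(integralClosure ℤ K).toSubring.toAddSubgroup ⧸
          R.toAddSubgroup.addSubgroupOf (integralClosure ℤ K).toSubring.toAddSubgroup))
    (𝔭 : Ideal ↥R) (hprime : 𝔭.IsPrime) (hpmem : (p : ↥R) ∈ 𝔭) :
    ∃ J : Submodule ↥R K,
      Submodule.span ↥R (Subtype.val '' (𝔭 : Set ↥R)) * J = 1 := by
  classical
  have hRO := lemRO hfree
  haveI hMF : Module.Finite ℤ ↥R := lemFin hfree
  haveI hfin : Finite (↥(integralClosure ℤ K).toSubring.toAddSubgroup ⧸
      R.toAddSubgroup.addSubgroupOf (integralClosure ℤ K).toSubring.toAddSubgroup) :=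
    lemFinite hfree
  set m := Nat.card (↥(integralClosure ℤ K).toSubring.toAddSubgroup ⧸
      R.toAddSubgroup.addSubgroupOf (integralClosure ℤ K).toSubring.toAddSubgroup) with hmdef
  have hm0 : m ≠ 0 := Nat.card_ne_zero.mpr ⟨inferInstance, inferInstance⟩
  -- m • O ⊆ R
  have hmO : ∀ x ∈ integralClosure ℤ K, (m : K) * x ∈ R := by
    intro x hx
    have h := AddSubgroup.nsmul_index_mem
      (R.toAddSubgroup.addSubgroupOf (integralClosure ℤ K).toSubring.toAddSubgroup)
      (⟨x, hx⟩ : ↥(integralClosure ℤ K).toSubring.toAddSubgroup)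
    rw [AddSubgroup.mem_addSubgroupOf] at h
    have hidx : (R.toAddSubgroup.addSubgroupOf
        (integralClosure ℤ K).toSubring.toAddSubgroup).index = m := rfl
    rw [hidx] at h
    have hcoe := map_nsmul ((integralClosure ℤ K).toSubring.toAddSubgroup.subtype) m
      (⟨x, hx⟩ : ↥(integralClosure ℤ K).toSubring.toAddSubgroup)
    have hval : ∀ g : ↥(integralClosure ℤ K).toSubring.toAddSubgroup,
        (integralClosure ℤ K).toSubring.toAddSubgroup.subtype g = (g : K) := fun _ => rfl
    rw [hval, hval] at hcoe
    have h2 : ((m • (⟨x, hx⟩ : ↥(integralClosure ℤ K).toSubring.toAddSubgroup) : _) : K)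
        = (m : K) * x := by
      rw [hcoe, nsmul_eq_mul]
    rwa [h2] at h
  -- p and m are coprime, so m ∉ 𝔭
  have hmnot : (m : ↥R) ∉ 𝔭 := by
    intro hmp
    obtain ⟨a, b, hab⟩ := (Nat.isCoprime_iff_coprime.mpr (hp.coprime_iff_not_dvd.mpr hnd))
    have : (1 : ↥R) ∈ 𝔭 := by
      have h1 : (1 : ↥R) = a * (p : ↥R) + b * (m : ↥R) := by
        have := congrArg (fun t : ℤ => (t : ↥R)) hab
        push_cast at this
        exact this.symm
      rw [h1]
      exact 𝔭.add_mem (𝔭.mul_mem_left _ hpmem) (𝔭.mul_mem_left _ hmp)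
    exact hprime.ne_top (𝔭.eq_top_iff_one.mpr this)
  -- 𝔭 is maximal
  have hmax : 𝔭.IsMaximal := by
    haveI : Finite (↥R ⧸ 𝔭) := by
      have hFG : AddGroup.FG (↥R ⧸ 𝔭) := by
        haveI : AddGroup.FG ↥R := Module.Finite.iff_addGroup_fg.mp hMF
        exact AddGroup.fg_of_surjective (f := (Ideal.Quotient.mk 𝔭).toAddMonoidHom)
          Ideal.Quotient.mk_surjective
      apply AddCommGroup.finite_of_fg_torsion
      intro g
      obtain ⟨r, rfl⟩ := Ideal.Quotient.mk_surjective g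
      refine isOfFinAddOrder_iff_nsmul_eq_zero.mpr ⟨p, hp.pos, ?_⟩
      have : p • (Ideal.Quotient.mk 𝔭 r) = Ideal.Quotient.mk 𝔭 (p • r) := by
        simp
      rw [this]
      rw [Ideal.Quotient.eq_zero_iff_mem]
      have : p • r = (p : ↥R) * r := by rw [nsmul_eq_mul]
      rw [this]
      exact 𝔭.mul_mem_right _ hpmem
    haveI := hprime
    exact Ideal.Quotient.maximal_of_isField _ (Finite.isField_of_domain _)
  obtain ⟨y, i, hi, hyi⟩ := hmax.exists_inv hmnot
  -- move 𝔭 to an ideal of 𝓞 K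
  set O := NumberField.RingOfIntegers K
  let f : ↥R → O := fun r => ⟨(r : K), hRO _ r.2⟩
  set Io : Ideal O := Ideal.span (f '' (𝔭 : Set ↥R)) with hIo
  have hIone : Io ≠ ⊥ := by
    intro hbot
    have : f (p : ↥R) ∈ Io := Ideal.subset_span ⟨_, hpmem, rfl⟩
    rw [hbot, Ideal.mem_bot] at this
    have : ((p : ↥R) : K) = 0 := congrArg (algebraMap O K) this
    have hpK : ((p : ↥R) : K) = (p : K) := by push_cast; rfl
    rw [hpK] at this
    exact (Nat.cast_ne_zero (R := K)).mpr hp.ne_zero this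
  have hIfr : (Io : FractionalIdeal (nonZeroDivisors O) K) ≠ 0 := by
    rwa [ne_eq, FractionalIdeal.coeIdeal_eq_zero]
  have hProd0 : (Io : FractionalIdeal (nonZeroDivisors O) K) *
      (Io : FractionalIdeal (nonZeroDivisors O) K)⁻¹ = 1 :=
    mul_inv_cancel₀ hIfr
  set J' : Submodule O K :=
    (((Io : FractionalIdeal (nonZeroDivisors O) K)⁻¹ :
      FractionalIdeal (nonZeroDivisors O) K) : Submodule O K) with hJ'
  have hProd : IsLocalization.coeSubmodule K Io * J' = 1 := by
    have := congrArg (fun I : FractionalIdeal (nonZeroDivisors O) K => (I : Submodule O K)) hProd0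
    simpa only [FractionalIdeal.coe_mul, FractionalIdeal.coe_coeIdeal,
      FractionalIdeal.coe_one] using this
  -- the candidate inverse
  set P : Submodule ↥R K := Submodule.span ↥R (Subtype.val '' (𝔭 : Set ↥R)) with hPdef
  set JR : Submodule ↥R K :=
    Submodule.span ↥R ((fun j => (m : K) * j) '' (J' : Set K)) ⊔ 1 with hJR
  refine ⟨JR, ?_⟩
  have hle : P * JR ≤ 1 := by
    rw [hJR, Submodule.mul_sup]
    apply sup_le
    · rw [hPdef, Submodule.span_mul_span]
      rw [Submodule.span_le]
      rintro x ⟨q, ⟨q', hq', rfl⟩, z, ⟨j, hj, rfl⟩, rfl⟩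
      have hqj : (q' : K) * j ∈ (1 : Submodule O K) := by
        rw [← hProd]
        refine Submodule.mul_mem_mul ?_ hj
        rw [IsLocalization.mem_coeSubmodule]
        exact ⟨f q', Ideal.subset_span ⟨q', hq', rfl⟩, rfl⟩
      rw [lem1memO] at hqj
      show (q' : K) * ((m : K) * j) ∈ ((1 : Submodule ↥R K) : Set K)
      have heq : (q' : K) * ((m : K) * j) = (m : K) * ((q' : K) * j) := by ring
      rw [SetLike.mem_coe, lem1mem, heq]
      exact hmO _ hqj
    · rw [mul_one, hPdef, Submodule.span_le]
      rintro x ⟨q, hq, rfl⟩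
      rw [SetLike.mem_coe, lem1mem]
      exact q.2
  have h1K : (1 : K) ∈ IsLocalization.coeSubmodule K Io * J' := by
    rw [hProd]
    exact lem1memO.mpr (Subalgebra.one_mem _)
  have hkey : ∀ z : O, z ∈ Io → ∀ j ∈ J',
      (m : K) * ((algebraMap O K z) * j) ∈ P * JR := by
    intro z hz
    induction hz using Submodule.span_induction with
    | mem w hw =>
        intro j hj
        obtain ⟨q, hq, rfl⟩ := hw
        have h1 : (m : K) * ((algebraMap O K (f q)) * j) = (q : K) * ((m : K) * j) := by
          have h2 : algebraMap O K (f q) = (q : K) := rfl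
          rw [h2]; ring
        rw [h1]
        refine Submodule.mul_mem_mul ?_ ?_
        · rw [hPdef]; exact Submodule.subset_span ⟨q, hq, rfl⟩
        · rw [hJR]; exact Submodule.mem_sup_left (Submodule.subset_span ⟨j, hj, rfl⟩)
    | zero =>
        intro j hj
        simpa using (P * JR).zero_mem
    | add z w _ _ ihz ihw =>
        intro j hj
        have h1 : (m : K) * ((algebraMap O K (z + w)) * j) =
            (m : K) * ((algebraMap O K z) * j) + (m : K) * ((algebraMap O K w) * j) := by
          rw [map_add]; ring
        rw [h1]
        exact add_mem (ihz j hj) (ihw j hj)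
    | smul o z _ ih =>
        intro j hj
        have hsm : algebraMap O K (o • z) = algebraMap O K o * algebraMap O K z := by
          rw [smul_eq_mul, map_mul]
        have h1 : (m : K) * ((algebraMap O K (o • z)) * j) =
            (m : K) * ((algebraMap O K z) * ((algebraMap O K o) * j)) := by
          rw [hsm]; ring
        rw [h1]
        refine ih _ ?_
        have h2 := J'.smul_mem o hj
        rwa [Algebra.smul_def] at h2
  have hmm : (m : K) * 1 ∈ P * JR := by
    refine Submodule.mul_induction_on (C := fun x => (m : K) * x ∈ P * JR) h1K ?_ ?_
    · intro a ha b hb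
      obtain ⟨z, hz, rfl⟩ := (IsLocalization.mem_coeSubmodule _ _).mp ha
      exact hkey z hz b hb
    · intro x y hx hy
      rw [mul_add]
      exact add_mem hx hy
  have hmm' : ((m : ↥R) : K) ∈ P * JR := by
    rw [mul_one] at hmm
    have h : ((m : ↥R) : K) = (m : K) := by push_cast; rfl
    rwa [h]
  have h1mem : (1 : K) ∈ P * JR := by
    have hyK : (1 : K) = (y : K) * ((m : ↥R) : K) + (i : K) := by
      have h := congrArg (fun t : ↥R => (t : K)) hyi
      simp only [Subring.coe_add, Subring.coe_mul, OneMemClass.coe_one] at h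
      exact h.symm
    rw [hyK]
    refine add_mem ?_ ?_
    · have h := Submodule.smul_mem (P * JR) y hmm'
      rwa [Subring.smul_def] at h
    · have h : (i : K) = (i : K) * 1 := (mul_one _).symm
      rw [h]
      refine Submodule.mul_mem_mul ?_ ?_
      · rw [hPdef]; exact Submodule.subset_span ⟨i, hi, rfl⟩
      · rw [hJR]; exact Submodule.mem_sup_right (lem1mem.mpr R.one_mem)
  exact le_antisymm hle (Submodule.one_le.mpr h1mem)
end MPR
section MP
variable {K : Type*} [Field K] [NumberField K] {R : Subring K}

lemma lemOneMem {𝔭 : Ideal ↥R}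
    (h : (1 : K) ∈ Submodule.span ↥R (Subtype.val '' (𝔭 : Set ↥R))) : (1 : ↥R) ∈ 𝔭 := by
  have hmap : Submodule.map (Algebra.linearMap ↥R K) 𝔭 =
      Submodule.span ↥R (Subtype.val '' (𝔭 : Set ↥R)) := by
    conv_lhs => rw [← Submodule.span_eq 𝔭]
    rw [Submodule.map_span]
    congr 1
  rw [← hmap] at h
  obtain ⟨q, hq, hq1⟩ := h
  have : q = 1 := Subtype.ext hq1
  rwa [← this]

lemma lemMP (hfree : Nonempty (Module.Basis (Fin (Module.finrank ℚ K)) ℤ ↥R))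
    (p : ℕ) (hp : p.Prime)
    (hdvd : p ∣ Nat.card
        (↥(integralClosure ℤ K).toSubring.toAddSubgroup ⧸
          R.toAddSubgroup.addSubgroupOf (integralClosure ℤ K).toSubring.toAddSubgroup)) :
    ∃ 𝔭 : Ideal ↥R, 𝔭.IsPrime ∧ (p : ↥R) ∈ 𝔭 ∧
      ¬ ∃ J : Submodule ↥R K,
          Submodule.span ↥R (Subtype.val '' (𝔭 : Set ↥R)) * J = 1 := by
  classical
  have hRO := lemRO hfree
  haveI hMF : Module.Finite ℤ ↥R := lemFin hfree
  haveI hfin : Finite (↥(integralClosure ℤ K).toSubring.toAddSubgroup ⧸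
      R.toAddSubgroup.addSubgroupOf (integralClosure ℤ K).toSubring.toAddSubgroup) :=
    lemFinite hfree
  set m := Nat.card (↥(integralClosure ℤ K).toSubring.toAddSubgroup ⧸
      R.toAddSubgroup.addSubgroupOf (integralClosure ℤ K).toSubring.toAddSubgroup) with hmdef
  have hm0 : m ≠ 0 := Nat.card_ne_zero.mpr ⟨inferInstance, inferInstance⟩
  have hmO : ∀ x ∈ integralClosure ℤ K, (m : K) * x ∈ R := by
    intro x hx
    have h := AddSubgroup.nsmul_index_mem
      (R.toAddSubgroup.addSubgroupOf (integralClosure ℤ K).toSubring.toAddSubgroup)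
      (⟨x, hx⟩ : ↥(integralClosure ℤ K).toSubring.toAddSubgroup)
    rw [AddSubgroup.mem_addSubgroupOf] at h
    have hidx : (R.toAddSubgroup.addSubgroupOf
        (integralClosure ℤ K).toSubring.toAddSubgroup).index = m := rfl
    rw [hidx] at h
    have hcoe := map_nsmul ((integralClosure ℤ K).toSubring.toAddSubgroup.subtype) m
      (⟨x, hx⟩ : ↥(integralClosure ℤ K).toSubring.toAddSubgroup)
    have hval : ∀ g : ↥(integralClosure ℤ K).toSubring.toAddSubgroup,
        (integralClosure ℤ K).toSubring.toAddSubgroup.subtype g = (g : K) := fun _ => rfl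
    rw [hval, hval] at hcoe
    have h2 : ((m • (⟨x, hx⟩ : ↥(integralClosure ℤ K).toSubring.toAddSubgroup) : _) : K)
        = (m : K) * x := by rw [hcoe, nsmul_eq_mul]
    rwa [h2] at h
  haveI : IsNoetherian ℤ ↥R := inferInstance
  haveI hNR : IsNoetherianRing ↥R := isNoetherianRing_iff.mpr (isNoetherian_of_tower ℤ this)
  -- the conductor ideal
  set 𝔠 : Ideal ↥R :=
    { carrier := {r : ↥R | ∀ x ∈ integralClosure ℤ K, (r : K) * x ∈ R}
      add_mem' := by
        intro a b ha hb x hx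
        have : ((a + b : ↥R) : K) * x = (a : K) * x + (b : K) * x := by
          push_cast; ring
        rw [this]; exact R.add_mem (ha x hx) (hb x hx)
      zero_mem' := by
        intro x hx
        have : ((0 : ↥R) : K) * x = 0 := by push_cast; ring
        rw [this]; exact R.zero_mem
      smul_mem' := by
        intro c r hr x hx
        have : ((c • r : ↥R) : K) * x = (c : K) * ((r : K) * x) := by
          rw [smul_eq_mul]; push_cast; ring
        rw [this]; exact R.mul_mem c.2 (hr x hx) } with h𝔠def
  have hsub : 𝔠 ⊔ Ideal.span {(p : ↥R)} ≠ ⊤ := by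
    intro htop
    obtain ⟨c, hc, z, hz, hcz⟩ := Submodule.mem_sup.mp
      (htop ▸ (Submodule.mem_top : (1 : ↥R) ∈ ⊤))
    obtain ⟨r, rfl⟩ := Ideal.mem_span_singleton'.mp hz
    haveI := Fintype.ofFinite (↥(integralClosure ℤ K).toSubring.toAddSubgroup ⧸
      R.toAddSubgroup.addSubgroupOf (integralClosure ℤ K).toSubring.toAddSubgroup)
    have hpcard : p ∣ Fintype.card (↥(integralClosure ℤ K).toSubring.toAddSubgroup ⧸
        R.toAddSubgroup.addSubgroupOf (integralClosure ℤ K).toSubring.toAddSubgroup) := by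
      rwa [← Nat.card_eq_fintype_card]
    haveI : Fact p.Prime := ⟨hp⟩
    obtain ⟨g, hg⟩ := exists_prime_addOrderOf_dvd_card p hpcard
    obtain ⟨x, rfl⟩ := QuotientAddGroup.mk_surjective g
    have hpg : p • (QuotientAddGroup.mk x : _ ⧸ R.toAddSubgroup.addSubgroupOf
        (integralClosure ℤ K).toSubring.toAddSubgroup) = 0 := by
      rw [← hg]; exact addOrderOf_nsmul_eq_zero _
    rw [← QuotientAddGroup.mk_nsmul, QuotientAddGroup.eq_zero_iff] at hpg
    rw [AddSubgroup.mem_addSubgroupOf] at hpg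
    -- hpg : ((p • x : _) : K) ∈ R
    have hps : ((p • x : ↥(integralClosure ℤ K).toSubring.toAddSubgroup) : K)
        = (p : K) * (x : K) := by
      have hcoe := map_nsmul ((integralClosure ℤ K).toSubring.toAddSubgroup.subtype) p x
      have hval : ∀ g : ↥(integralClosure ℤ K).toSubring.toAddSubgroup,
          (integralClosure ℤ K).toSubring.toAddSubgroup.subtype g = (g : K) := fun _ => rfl
      rw [hval, hval] at hcoe
      rw [hcoe, nsmul_eq_mul]
    have hcx : (c : K) * (x : K) ∈ R := hc (x : K) x.2
    have h2 : ((x : K) : K) = (c : K) * (x : K) + (r : K) *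
        ((p • x : ↥(integralClosure ℤ K).toSubring.toAddSubgroup) : K) := by
      rw [hps]
      have h3 := congrArg (fun t : ↥R => (t : K)) hcz
      simp only [Subring.coe_add, Subring.coe_mul] at h3
      have h4 : ((p : ↥R) : K) = (p : K) := by push_cast; rfl
      rw [h4] at h3
      have h5 : ((c : K) + (r : K) * (p : K)) * (x : K)
          = (c : K) * (x : K) + (r : K) * ((p : K) * (x : K)) := by ring
      rw [← h5, h3]; simp
    have hxR : (x : K) ∈ R := by
      rw [h2]
      exact R.add_mem hcx (R.mul_mem r.2 hpg)
    have hg0 : (QuotientAddGroup.mk x : _ ⧸ R.toAddSubgroup.addSubgroupOf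
        (integralClosure ℤ K).toSubring.toAddSubgroup) = 0 := by
      rw [QuotientAddGroup.eq_zero_iff, AddSubgroup.mem_addSubgroupOf]
      exact hxR
    rw [hg0, addOrderOf_zero] at hg
    exact hp.ne_one hg.symm
  obtain ⟨𝔪, hmax, hle⟩ := Ideal.exists_le_maximal _ hsub
  have hpm : (p : ↥R) ∈ 𝔪 :=
    hle (Submodule.mem_sup_right (Ideal.subset_span (Set.mem_singleton _)))
  have h𝔠m : 𝔠 ≤ 𝔪 := le_trans le_sup_left hle
  refine ⟨𝔪, hmax.isPrime, hpm, ?_⟩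
  rintro ⟨J, hJ⟩
  -- the integral closure as an R-submodule of K
  set C : Submodule ↥R K :=
    { carrier := (integralClosure ℤ K : Set K)
      add_mem' := fun ha hb => Subalgebra.add_mem _ ha hb
      zero_mem' := Subalgebra.zero_mem _
      smul_mem' := by
        intro r x hx
        rw [Subring.smul_def]
        exact Subalgebra.mul_mem _ (hRO _ r.2) hx } with hCdef
  have hP1 : Submodule.span ↥R (Subtype.val '' (𝔪 : Set ↥R)) ≤ 1 := by
    rw [Submodule.span_le]
    rintro x ⟨q, hq, rfl⟩
    rw [SetLike.mem_coe, lem1mem]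
    exact q.2
  have hPne : Submodule.span ↥R (Subtype.val '' (𝔪 : Set ↥R)) ≠ 1 := by
    intro heq
    have h1 : (1 : K) ∈ Submodule.span ↥R (Subtype.val '' (𝔪 : Set ↥R)) := by
      rw [heq]; exact lem1mem.mpr R.one_mem
    exact hmax.ne_top (𝔪.eq_top_iff_one.mpr (lemOneMem h1))
  have h1C : (1 : K) ∈ C := Subalgebra.one_mem _
  have hCC : C * C ≤ C := by
    rw [Submodule.mul_le]
    intro a ha b hb
    exact Subalgebra.mul_mem _ ha hb
  have hc0 : (m : K) ≠ 0 := Nat.cast_ne_zero.mpr hm0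
  have hcF : (m : K) ∈ (1 : Submodule ↥R K) / C := by
    rw [Submodule.mem_div_iff_forall_mul_mem]
    intro y hy
    exact lem1mem.mpr (hmO y hy)
  have hfp : (1 : Submodule ↥R K) / C ≤
      Submodule.span ↥R (Subtype.val '' (𝔪 : Set ↥R)) := by
    intro x hx
    have hx1 : x ∈ (1 : Submodule ↥R K) := by
      have := Submodule.mem_div_iff_forall_mul_mem.mp hx 1 h1C
      rwa [mul_one] at this
    obtain ⟨rx, hrx⟩ : ∃ rx : ↥R, (rx : K) = x := by
      rw [lem1mem] at hx1
      exact ⟨⟨x, hx1⟩, rfl⟩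
    have hrx𝔠 : rx ∈ 𝔠 := by
      intro y hy
      rw [hrx]
      exact lem1mem.mp (Submodule.mem_div_iff_forall_mul_mem.mp hx y hy)
    exact Submodule.subset_span ⟨rx, h𝔠m hrx𝔠, hrx⟩
  exact lemA R _ hP1 hPne C h1C hCC (m : K) hc0 hcF hfp J hJ
end MP

/-- Let `R` be a full-rank order in a number field `K` (a subring that is free of
rank `[K:ℚ]` as a `ℤ`-module) and `p` a prime number. Then `p` divides the index
`#(𝒪_K/R)` of `R` in the maximal order `𝒪_K` (the integral closure of `ℤ` in `K`)
iff `R` has a non-invertible prime ideal containing `p`: a prime ideal `𝔭` of `R`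
with `p ∈ 𝔭` such that there is no `R`-submodule `J` of `K` with `𝔭J = R`. -/
theorem stmt_17 {K : Type*} [Field K] [NumberField K] (R : Subring K)
    (hfree : Nonempty (Module.Basis (Fin (Module.finrank ℚ K)) ℤ ↥R))
    (p : ℕ) (hp : p.Prime) :
    p ∣ Nat.card
        (↥(integralClosure ℤ K).toSubring.toAddSubgroup ⧸
          R.toAddSubgroup.addSubgroupOf (integralClosure ℤ K).toSubring.toAddSubgroup) ↔
      ∃ 𝔭 : Ideal ↥R, 𝔭.IsPrime ∧ (p : ↥R) ∈ 𝔭 ∧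
        ¬ ∃ J : Submodule ↥R K,
            Submodule.span ↥R (Subtype.val '' (𝔭 : Set ↥R)) * J = 1 := by
  constructor
  · exact fun h => lemMP hfree p hp h
  · rintro ⟨𝔭, hprime, hpmem, hninv⟩
    by_contra hnd
    exact hninv (lemMPR hfree p hp hnd 𝔭 hprime hpmem)
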